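/- arXiv:1607.01568 — 4 statements merged into one kernel-verified Lean document; each statement's English description precedes it below -/
import Mathlib

section
/- Let p and p' be real numbers with 0 < p < 1/2 and 0 < p' < 1. Let c1, c2, c3, c4, c5 be independent Boolean random variables with Pr[c1 = 0] = Pr[c5 = 0] = (1-2p)/(1-p), Pr[c2 = 0] = Pr[c4 = 0] = p, and Pr[c3 = 0] = p'. Then the probability of the event { c3 = 0 } ∪ { c1 = 0 ∧ c2 = 1 ∧ c3 = 1 } ∪ { c2 = 0 ∧ c3 = 1 ∧ c4 = 1 ∧ c5 = 0 } ∪ { c1 = 1 ∧ c2 = 1 ∧ c3 = 1 ∧ c4 = 1 ∧ c5 = 0 } equals 1 - 4p²(1-p'). -/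
open Finset

/-- `gadgetWeight p p' i b` is the probability that the `i`-th basis-choice bit `cᵢ`
equals `b`, where `false` encodes the bit value `0`:
`Pr[c₁ = 0] = Pr[c₅ = 0] = (1-2p)/(1-p)`, `Pr[c₂ = 0] = Pr[c₄ = 0] = p`,
`Pr[c₃ = 0] = p'` (indices are shifted to `0,…,4`). -/
noncomputable def gadgetWeight (p p' : ℝ) (i : Fin 5) (b : Bool) : ℝ :=
  let q : ℝ :=
    if i = 0 ∨ i = 4 then (1 - 2 * p) / (1 - p)
    else if i = 1 ∨ i = 3 then p
    else p'
  if b then 1 - q else q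

open scoped Classical in
/-- Probability of the event `E` under the product measure on `{0,1}⁵` with the
stated marginals. -/
noncomputable def gadgetProb (p p' : ℝ) (E : (Fin 5 → Bool) → Prop) : ℝ :=
  ∑ c : Fin 5 → Bool, if E c then ∏ i, gadgetWeight p p' i (c i) else 0

lemma gw0 (p p' : ℝ) (b : Bool) :
    gadgetWeight p p' 0 b = if b then 1 - (1 - 2 * p) / (1 - p) else (1 - 2 * p) / (1 - p) := rfl
lemma gw4 (p p' : ℝ) (b : Bool) :
    gadgetWeight p p' 4 b = if b then 1 - (1 - 2 * p) / (1 - p) else (1 - 2 * p) / (1 - p) := rfl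
lemma gw1 (p p' : ℝ) (b : Bool) :
    gadgetWeight p p' 1 b = if b then 1 - p else p := rfl
lemma gw3 (p p' : ℝ) (b : Bool) :
    gadgetWeight p p' 3 b = if b then 1 - p else p := rfl
lemma gw2 (p p' : ℝ) (b : Bool) :
    gadgetWeight p p' 2 b = if b then 1 - p' else p' := rfl

lemma sum_cons {n : ℕ} (f : (Fin (n+1) → Bool) → ℝ) :
    ∑ c, f c = ∑ b : Bool, ∑ c : Fin n → Bool, f (Fin.cons b c) := by
  rw [← Fintype.sum_prod_type (f := fun x : Bool × (Fin n → Bool) => f (Fin.cons x.1 x.2))]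
  exact Fintype.sum_equiv (Fin.consEquiv fun _ => Bool).symm _ _ (by
    intro x
    simp [Fin.consEquiv])

lemma sum_zero (f : (Fin 0 → Bool) → ℝ) : ∑ c, f c = f ![] := by
  rw [Fintype.sum_unique]
  congr 1

lemma c5_0 (b0 b1 b2 b3 b4 : Bool) :
    (Fin.cons b0 (Fin.cons b1 (Fin.cons b2 (Fin.cons b3 (Fin.cons b4 ![]))))
      : Fin 5 → Bool) 0 = b0 := rfl
lemma c5_1 (b0 b1 b2 b3 b4 : Bool) :
    (Fin.cons b0 (Fin.cons b1 (Fin.cons b2 (Fin.cons b3 (Fin.cons b4 ![]))))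
      : Fin 5 → Bool) 1 = b1 := rfl
lemma c5_2 (b0 b1 b2 b3 b4 : Bool) :
    (Fin.cons b0 (Fin.cons b1 (Fin.cons b2 (Fin.cons b3 (Fin.cons b4 ![]))))
      : Fin 5 → Bool) 2 = b2 := rfl
lemma c5_3 (b0 b1 b2 b3 b4 : Bool) :
    (Fin.cons b0 (Fin.cons b1 (Fin.cons b2 (Fin.cons b3 (Fin.cons b4 ![]))))
      : Fin 5 → Bool) 3 = b3 := rfl
lemma c5_4 (b0 b1 b2 b3 b4 : Bool) :
    (Fin.cons b0 (Fin.cons b1 (Fin.cons b2 (Fin.cons b3 (Fin.cons b4 ![]))))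
      : Fin 5 → Bool) 4 = b4 := rfl

set_option maxHeartbeats 2000000 in
/-- The probability that the gadget's output is a computational-basis (Z-basis) state
equals `1 - 4p²(1-p')`. -/
theorem gadget_zbasis_prob (p p' : ℝ) (hp0 : 0 < p) (hp : p < 1 / 2)
    (hp'0 : 0 < p') (hp' : p' < 1) :
    gadgetProb p p' (fun c =>
      c 2 = false ∨
      (c 0 = false ∧ c 1 = true ∧ c 2 = true) ∨
      (c 1 = false ∧ c 2 = true ∧ c 3 = true ∧ c 4 = false) ∨
      (c 0 = true ∧ c 1 = true ∧ c 2 = true ∧ c 3 = true ∧ c 4 = false))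
      = 1 - 4 * p ^ 2 * (1 - p') := by
  have hne : (1 : ℝ) - p ≠ 0 := by nlinarith
  rw [gadgetProb]
  simp only [sum_cons, sum_zero]
  simp only [Fintype.sum_bool, c5_0, c5_1, c5_2, c5_3, c5_4, Fin.prod_univ_five,
    gw0, gw1, gw2, gw3, gw4, if_true, if_false, Bool.false_eq_true, Bool.true_eq_false,
    and_true, and_false, true_and, false_and, or_false, false_or, or_true, true_or,
    and_self, if_true, if_false]
  norm_num
  field_simp
  ring
end

section
/- Let p and p' be real numbers with 0 < p < 1/2 and 0 < p' < 1. Let c1, c2, c3, c4, c5 be independent Boolean random variables with Pr[c1 = 0] = Pr[c5 = 0] = (1-2p)/(1-p), Pr[c2 = 0] = Pr[c4 = 0] = p, and Pr[c3 = 0] = p'. Then each of the four events { c2 = 0 ∧ c3 = 1 ∧ c4 = 0 }, { c2 = 0 ∧ c3 = 1 ∧ c4 = 1 ∧ c5 = 1 }, { c1 = 1 ∧ c2 = 1 ∧ c3 = 1 ∧ c4 = 0 }, and { c1 = c2 = c3 = c4 = c5 = 1 } has probability exactly p²(1-p'). -/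
open Finset

open scoped Classical in
lemma gadgetProb_pi (p p' : ℝ) (S : Fin 5 → Bool → Prop) :
    gadgetProb p p' (fun c => ∀ i, S i (c i))
      = ∏ i, ∑ b, if S i b then gadgetWeight p p' i b else 0 := by
  have h : ∀ c : Fin 5 → Bool,
      (@ite ℝ (∀ i, S i (c i)) (Classical.propDecidable _)
          (∏ i, gadgetWeight p p' i (c i)) 0)
        = ∏ i, if S i (c i) then gadgetWeight p p' i (c i) else 0 := by
    intro c
    by_cases h : ∀ i, S i (c i)
    · rw [if_pos h]
      exact Finset.prod_congr rfl fun i _ => (if_pos (h i)).symm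
    · obtain ⟨i, hi⟩ := not_forall.mp h
      rw [if_neg h]
      exact (Finset.prod_eq_zero (mem_univ i) (by simp [hi])).symm
  calc gadgetProb p p' (fun c => ∀ i, S i (c i))
      = ∑ c : Fin 5 → Bool, ∏ i, if S i (c i) then gadgetWeight p p' i (c i) else 0 :=
        Finset.sum_congr rfl fun c _ => h c
    _ = _ := by
        rw [← Fintype.piFinset_univ]
        exact Finset.sum_prod_piFinset univ fun i b => if S i b then gadgetWeight p p' i b else 0

open scoped Classical in
lemma gadgetProb_congr (p p' : ℝ) {E E' : (Fin 5 → Bool) → Prop}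
    (h : ∀ c, E c ↔ E' c) : gadgetProb p p' E = gadgetProb p p' E' :=
  Finset.sum_congr rfl fun c _ => if_congr (h c) rfl rfl

open scoped Classical in
lemma gadgetProb_eval (p p' : ℝ) (S : Fin 5 → Bool → Prop)
    {E : (Fin 5 → Bool) → Prop} (h : ∀ c, E c ↔ ∀ i, S i (c i)) :
    gadgetProb p p' E = ∏ i, ∑ b, if S i b then gadgetWeight p p' i b else 0 :=
  (gadgetProb_congr p p' h).trans (gadgetProb_pi p p' S)

/-- Each of the four rows of the gadget's output table that yields a rotated state
`|+ₖ⟩` occurs with probability exactly `p²(1-p')`. -/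
theorem gadget_plus_probs (p p' : ℝ) (hp0 : 0 < p) (hp : p < 1 / 2)
    (hp'0 : 0 < p') (hp' : p' < 1) :
    gadgetProb p p' (fun c => c 1 = false ∧ c 2 = true ∧ c 3 = false)
        = p ^ 2 * (1 - p') ∧
    gadgetProb p p' (fun c => c 1 = false ∧ c 2 = true ∧ c 3 = true ∧ c 4 = true)
        = p ^ 2 * (1 - p') ∧
    gadgetProb p p' (fun c => c 0 = true ∧ c 1 = true ∧ c 2 = true ∧ c 3 = false)
        = p ^ 2 * (1 - p') ∧
    gadgetProb p p' (fun c =>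
        c 0 = true ∧ c 1 = true ∧ c 2 = true ∧ c 3 = true ∧ c 4 = true)
        = p ^ 2 * (1 - p') := by
  have hp1 : (1 : ℝ) - p ≠ 0 := by nlinarith
  refine ⟨?_, ?_, ?_, ?_⟩
  · rw [gadgetProb_eval p p'
        (fun i b => (i = 1 → b = false) ∧ (i = 2 → b = true) ∧ (i = 3 → b = false))
        (fun c => ⟨fun h i => ⟨fun hi => by subst hi; exact h.1,
            fun hi => by subst hi; exact h.2.1, fun hi => by subst hi; exact h.2.2⟩,
          fun h => ⟨(h 1).1 rfl, (h 2).2.1 rfl, (h 3).2.2 rfl⟩⟩),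
        Fin.prod_univ_five]
    simp only [Fintype.sum_bool]
    norm_num
    try simp +decide [gadgetWeight]
    try field_simp
  · rw [gadgetProb_eval p p'
        (fun i b => (i = 1 → b = false) ∧ (i = 2 → b = true) ∧ (i = 3 → b = true) ∧
          (i = 4 → b = true))
        (fun c => ⟨fun h i => ⟨fun hi => by subst hi; exact h.1,
            fun hi => by subst hi; exact h.2.1, fun hi => by subst hi; exact h.2.2.1,
            fun hi => by subst hi; exact h.2.2.2⟩,
          fun h => ⟨(h 1).1 rfl, (h 2).2.1 rfl, (h 3).2.2.1 rfl, (h 4).2.2.2 rfl⟩⟩),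
        Fin.prod_univ_five]
    simp only [Fintype.sum_bool]
    norm_num
    try simp +decide [gadgetWeight]
    try field_simp
    ring
  · rw [gadgetProb_eval p p'
        (fun i b => (i = 0 → b = true) ∧ (i = 1 → b = true) ∧ (i = 2 → b = true) ∧
          (i = 3 → b = false))
        (fun c => ⟨fun h i => ⟨fun hi => by subst hi; exact h.1,
            fun hi => by subst hi; exact h.2.1, fun hi => by subst hi; exact h.2.2.1,
            fun hi => by subst hi; exact h.2.2.2⟩,
          fun h => ⟨(h 0).1 rfl, (h 1).2.1 rfl, (h 2).2.2.1 rfl, (h 3).2.2.2 rfl⟩⟩),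
        Fin.prod_univ_five]
    simp only [Fintype.sum_bool]
    norm_num
    try simp +decide [gadgetWeight]
    try field_simp
    ring
  · rw [gadgetProb_eval p p'
        (fun i b => (i = 0 → b = true) ∧ (i = 1 → b = true) ∧ (i = 2 → b = true) ∧
          (i = 3 → b = true) ∧ (i = 4 → b = true))
        (fun c => ⟨fun h i => ⟨fun hi => by subst hi; exact h.1,
            fun hi => by subst hi; exact h.2.1, fun hi => by subst hi; exact h.2.2.1,
            fun hi => by subst hi; exact h.2.2.2.1, fun hi => by subst hi; exact h.2.2.2.2⟩,
          fun h => ⟨(h 0).1 rfl, (h 1).2.1 rfl, (h 2).2.2.1 rfl, (h 3).2.2.2.1 rfl,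
            (h 4).2.2.2.2 rfl⟩⟩),
        Fin.prod_univ_five]
    simp only [Fintype.sum_bool]
    norm_num
    try simp +decide [gadgetWeight]
    try field_simp
    ring
end

section
/- Let p, p' be real with 0 < p < 1/2, 0 < p' < 1. Let c = (c1,...,c5) and a = (a1,...,a5) be independent Boolean random vectors, where a1,...,a5 are independent uniform bits, and c1,...,c5 are independent with Pr[c1 = 0] = Pr[c5 = 0] = (1-2p)/(1-p), Pr[c2 = 0] = Pr[c4 = 0] = p, Pr[c3 = 0] = p'. Define the label L(a,c), taking values in the ten-element set {Z_0, Z_1, P_0, P_1, ..., P_7}, by the case distinction given in the context. Then Pr[L = Z_0] = Pr[L = Z_1] = (1 - 4p²(1-p'))/2, and Pr[L = P_k] = p²(1-p')/2 for every k ∈ {0,1,...,7}. -/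
open Finset

/-- The ten possible output states of the gadget (up to global phase):
`Z b` is the computational-basis state `|b⟩` and `P k` is the rotated state
`|+ₖ⟩ = (|0⟩ + e^{ikπ/4}|1⟩)/√2`. -/
inductive GadgetLabel
  | Z : Bool → GadgetLabel
  | P : Fin 8 → GadgetLabel
  deriving DecidableEq

open scoped Classical in
/-- Probability of the event `E ⊆ {0,1}⁵ × {0,1}⁵` where the `a`-bits are uniform
and the `c`-bits have the stated marginals, all independent. -/
noncomputable def gadgetProb2 (p p' : ℝ)
    (E : (Fin 5 → Bool) → (Fin 5 → Bool) → Prop) : ℝ :=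
  ∑ a : Fin 5 → Bool, ∑ c : Fin 5 → Bool,
    if E a c then (∏ _i : Fin 5, (1 / 2 : ℝ)) * ∏ i, gadgetWeight p p' i (c i) else 0

open Fin.NatCast in
/-- The label of the gadget's output state, as a function of the random bits
`a = (a₁,…,a₅)` and `c = (c₁,…,c₅)` (0-indexed; `false` encodes bit `0`). -/
def gadgetLabel (a c : Fin 5 → Bool) : GadgetLabel :=
  if c 2 = false then .Z (a 2)
  else if c 0 = false ∧ c 1 = true then .Z (xor (a 0) (a 1))
  else if c 1 = false ∧ c 3 = true ∧ c 4 = false then .Z (xor (a 3) (a 4))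
  else if c 0 = true ∧ c 1 = true ∧ c 3 = true ∧ c 4 = false then .Z (xor (a 3) (a 4))
  else if c 1 = false ∧ c 3 = false then
    .P ((4 * (xor (a 1) (xor (a 2) (a 3))).toNat : ℕ))
  else if c 1 = false ∧ c 3 = true ∧ c 4 = true then
    .P ((2 + 4 * (xor (a 1) (xor (a 2) (xor (a 3) (a 4)))).toNat : ℕ))
  else if c 0 = true ∧ c 1 = true ∧ c 3 = false then
    (if a 1 = false then .P ((1 + 4 * (xor (a 0) (xor (a 2) (a 3))).toNat : ℕ))
     else .P ((7 - 4 * (xor (a 0) (xor (a 2) (a 3))).toNat : ℕ)))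
  else
    (if a 1 = false then
      .P ((3 + 4 * (xor (a 0) (xor (a 1) (xor (a 2) (xor (a 3) (a 4))))).toNat : ℕ))
     else
      .P ((5 - 4 * (xor (a 0) (xor (a 1) (xor (a 2) (xor (a 3) (a 4))))).toNat : ℕ)))


lemma sum_bool_cons {n : ℕ} (f : (Fin (n+1) → Bool) → ℝ) :
    ∑ g : Fin (n+1) → Bool, f g
      = (∑ g : Fin n → Bool, f (Matrix.vecCons false g))
        + ∑ g : Fin n → Bool, f (Matrix.vecCons true g) := by
  rw [← (Fin.consEquiv fun _ => Bool).sum_comp f, Fintype.sum_prod_type, Fintype.sum_bool]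
  simp [Fin.consEquiv, Matrix.vecCons, add_comm]

lemma sum_bool_zero (f : (Fin 0 → Bool) → ℝ) : ∑ g : Fin 0 → Bool, f g = f ![] :=
  Fintype.sum_subsingleton f ![]

set_option maxHeartbeats 4000000 in
/-- Each computational-basis label occurs with probability `(1 - 4p²(1-p'))/2` and each
rotated label `P k` occurs with probability `p²(1-p')/2`. -/
theorem gadget_label_probs (p p' : ℝ) (hp0 : 0 < p) (hp : p < 1 / 2)
    (hp'0 : 0 < p') (hp' : p' < 1) :
    (∀ b : Bool,
      gadgetProb2 p p' (fun a c => gadgetLabel a c = GadgetLabel.Z b)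
        = (1 - 4 * p ^ 2 * (1 - p')) / 2) ∧
    (∀ k : Fin 8,
      gadgetProb2 p p' (fun a c => gadgetLabel a c = GadgetLabel.P k)
        = p ^ 2 * (1 - p') / 2) := by
  have h1 : (1 : ℝ) - p ≠ 0 := by linarith
  constructor
  · intro b
    cases b <;>
    · unfold gadgetProb2
      simp only [sum_bool_cons, sum_bool_zero]
      simp (config := { decide := true }) only [gadgetLabel, gadgetWeight,
        Matrix.cons_val_zero, Matrix.cons_val_one, Matrix.head_cons, Matrix.cons_val_two,
        Matrix.tail_cons, Matrix.cons_val_three, Matrix.cons_val_four, Fin.prod_univ_five,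
        Finset.prod_const, Finset.card_univ, Fintype.card_fin, if_true, if_false,
        ite_true, ite_false, reduceIte]
      field_simp
      ring
  · intro k
    fin_cases k <;>
    · unfold gadgetProb2
      simp only [sum_bool_cons, sum_bool_zero]
      simp (config := { decide := true }) only [gadgetLabel, gadgetWeight,
        Matrix.cons_val_zero, Matrix.cons_val_one, Matrix.head_cons, Matrix.cons_val_two,
        Matrix.tail_cons, Matrix.cons_val_three, Matrix.cons_val_four, Fin.prod_univ_five,
        Finset.prod_const, Finset.card_univ, Fintype.card_fin, if_true, if_false,
        ite_true, ite_false, reduceIte]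
      field_simp
      ring
end

section
/- Let (F_j) be a finite family of 2×2 complex matrices satisfying Σ_j trace(F_j · F_j†) = 2 (equivalently, the completely positive map F(ρ) = Σ_j F_j ρ F_j† satisfies trace F(I/2) = 1). Define the Pauli-twirled map E(ρ) = (1/4) Σ_{o1 ∈ {0,1}} Σ_{o2 ∈ {0,1}} Σ_j (X^{o1} Z^{o2} F_j X^{o1} Z^{o2}) ρ (X^{o1} Z^{o2} F_j X^{o1} Z^{o2})†. Then E is trace preserving: trace(E(ρ)) = trace(ρ) for every 2×2 complex matrix ρ. -/
open Matrix

/-- The Pauli `X` matrix. -/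
def pauliX : Matrix (Fin 2) (Fin 2) ℂ := !![0, 1; 1, 0]

/-- The Pauli `Z` matrix. -/
def pauliZ : Matrix (Fin 2) (Fin 2) ℂ := !![1, 0; 0, -1]

lemma twirl_key (M ρ : Matrix (Fin 2) (Fin 2) ℂ) :
    ∑ o1 : Fin 2, ∑ o2 : Fin 2,
        ((pauliX ^ (o1 : ℕ) * pauliZ ^ (o2 : ℕ) * M *
            pauliX ^ (o1 : ℕ) * pauliZ ^ (o2 : ℕ)) * ρ *
          (pauliX ^ (o1 : ℕ) * pauliZ ^ (o2 : ℕ) * M *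
            pauliX ^ (o1 : ℕ) * pauliZ ^ (o2 : ℕ))ᴴ).trace
      = 2 * (M * Mᴴ).trace * ρ.trace := by
  simp only [Fin.sum_univ_two, Fin.val_zero, Fin.val_one, pow_zero, pow_one, one_mul, mul_one,
    Matrix.trace, Matrix.diag, Matrix.mul_apply, Matrix.conjTranspose_apply, pauliX, pauliZ]
  simp [Fin.sum_univ_two, Matrix.cons_val_zero, Matrix.cons_val_one, Matrix.head_cons]
  ring

/-- If the Kraus family `(Fⱼ)` satisfies `Σⱼ tr(Fⱼ Fⱼ†) = 2`, then the Pauli-twirled map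
`E(ρ) = (1/4) Σ_{o₁,o₂,j} (X^{o₁}Z^{o₂}FⱼX^{o₁}Z^{o₂}) ρ (X^{o₁}Z^{o₂}FⱼX^{o₁}Z^{o₂})†`
is trace preserving. -/
theorem pauli_twirled_trace_preserving (n : ℕ) (F : Fin n → Matrix (Fin 2) (Fin 2) ℂ)
    (hF : ∑ j, (F j * (F j)ᴴ).trace = 2) (ρ : Matrix (Fin 2) (Fin 2) ℂ) :
    ((1 / 4 : ℂ) • ∑ o1 : Fin 2, ∑ o2 : Fin 2, ∑ j,
        (pauliX ^ (o1 : ℕ) * pauliZ ^ (o2 : ℕ) * F j *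
            pauliX ^ (o1 : ℕ) * pauliZ ^ (o2 : ℕ)) * ρ *
          (pauliX ^ (o1 : ℕ) * pauliZ ^ (o2 : ℕ) * F j *
            pauliX ^ (o1 : ℕ) * pauliZ ^ (o2 : ℕ))ᴴ).trace
      = ρ.trace := by
  rw [Matrix.trace_smul]
  have swap : (∑ o1 : Fin 2, ∑ o2 : Fin 2, ∑ j,
        (pauliX ^ (o1 : ℕ) * pauliZ ^ (o2 : ℕ) * F j *
            pauliX ^ (o1 : ℕ) * pauliZ ^ (o2 : ℕ)) * ρ *
          (pauliX ^ (o1 : ℕ) * pauliZ ^ (o2 : ℕ) * F j *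
            pauliX ^ (o1 : ℕ) * pauliZ ^ (o2 : ℕ))ᴴ).trace
      = ∑ j, ∑ o1 : Fin 2, ∑ o2 : Fin 2,
        ((pauliX ^ (o1 : ℕ) * pauliZ ^ (o2 : ℕ) * F j *
            pauliX ^ (o1 : ℕ) * pauliZ ^ (o2 : ℕ)) * ρ *
          (pauliX ^ (o1 : ℕ) * pauliZ ^ (o2 : ℕ) * F j *
            pauliX ^ (o1 : ℕ) * pauliZ ^ (o2 : ℕ))ᴴ).trace := by
    rw [Matrix.trace_sum]
    simp_rw [Matrix.trace_sum]
    exact Eq.trans (Finset.sum_congr rfl fun o1 _ => Finset.sum_comm) Finset.sum_comm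
  rw [swap]
  have : ∀ j, ∑ o1 : Fin 2, ∑ o2 : Fin 2,
        ((pauliX ^ (o1 : ℕ) * pauliZ ^ (o2 : ℕ) * F j *
            pauliX ^ (o1 : ℕ) * pauliZ ^ (o2 : ℕ)) * ρ *
          (pauliX ^ (o1 : ℕ) * pauliZ ^ (o2 : ℕ) * F j *
            pauliX ^ (o1 : ℕ) * pauliZ ^ (o2 : ℕ))ᴴ).trace
      = 2 * (F j * (F j)ᴴ).trace * ρ.trace := fun j => twirl_key (F j) ρ
  simp_rw [this]
  rw [← Finset.sum_mul, ← Finset.mul_sum, hF]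
  rw [smul_eq_mul]
  ring
end
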